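/- Let C be a symmetric n×n real matrix, S ⊆ {1,…,n} with 1 ∈ S, and p ≥ 0 an integer, and consider feasible solutions of the balanced 2-period TSP instance (C, S, p) in which the first tour, started at node 1, visits its remaining nodes in increasing index order and the second tour, started at node 1, visits its remaining nodes in decreasing index order (pyramidal-structured solutions). Then the minimum total cost over all such pyramidal-structured feasible solutions equals min{ c_{12} + V(2, 1, 1), c_{21} + V(1, 2, 2) } if 2 ∉ S, and equals c_{12} + c_{21} + V(2, 2, 2) if 2 ∈ S, where V is the semantically defined dynamic-programming value function from the context (and where a value of +∞ indicates that no such feasible solution exists). -/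

import Mathlib

/-- Length of a walk along a list of nodes (sum of consecutive edge costs). -/
def pathLen (C : ℕ → ℕ → ℝ) : List ℕ → ℝ
  | [] => 0
  | [_] => 0
  | a :: b :: t => C a b + pathLen C (b :: t)

/-- Length of the closed tour visiting the nodes of `l` in order and
returning from the last node to the first one. -/
def tourLen (C : ℕ → ℕ → ℝ) (l : List ℕ) : ℝ :=
  pathLen C (l ++ l.take 1)

/-- `(A, B)` is a feasible completion from `(x, y)`:
`A ∪ B = {h+1,…,n}` and `A ∩ B = S ∩ {h+1,…,n}` where `h = max x y`. -/
def IsFeasCompl (n : ℕ) (S : Finset ℕ) (x y : ℕ) (A B : Finset ℕ) : Prop :=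
  A ∪ B = Finset.Icc (max x y + 1) n ∧ A ∩ B = S ∩ Finset.Icc (max x y + 1) n

/-- Length of the feasible completion `(A, B)` from `(x, y)`: the walk goes
from `x` through the elements of `A` in increasing order to node `1`, and
then from node `1` through the elements of `B` in decreasing order to `y`. -/
noncomputable def complLen (C : ℕ → ℕ → ℝ) (x y : ℕ) (A B : Finset ℕ) : ℝ :=
  pathLen C (x :: (A.sort (· ≤ ·) ++ [1])) +
    pathLen C (1 :: ((B.sort (· ≤ ·)).reverse ++ [y]))

/-- The semantically defined dynamic-programming value function `V(x, y, m)`: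
the minimum length over all feasible completions `(A, B)` from `(x, y)`
respecting the balance window `⌈(n+|S|−p)/2⌉ ≤ m + |B| ≤ ⌊(n+|S|+p)/2⌋`;
it is `+∞` if no such completion exists, or if `x ≠ y` and
`S ∩ {min(x,y)+1,…,max(x,y)} ≠ ∅`. -/
noncomputable def V (n : ℕ) (C : ℕ → ℕ → ℝ) (S : Finset ℕ) (p : ℕ)
    (x y : ℕ) (m : ℤ) : EReal :=
  if x ≠ y ∧ (S ∩ Finset.Icc (min x y + 1) (max x y)).Nonempty then ⊤
  else
    ⨅ AB : {AB : Finset ℕ × Finset ℕ //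
        IsFeasCompl n S x y AB.1 AB.2 ∧
        ⌈((n : ℚ) + S.card - p) / 2⌉ ≤ m + AB.2.card ∧
        m + AB.2.card ≤ ⌊((n : ℚ) + S.card + p) / 2⌋},
      ((complLen C x y AB.1.1 AB.1.2 : ℝ) : EReal)

/-- `(T₁, T₂)` is a feasible node allocation of the balanced 2-period TSP:
`T₁ ∪ T₂ = {1,…,n}`, `T₁ ∩ T₂ = S`, and `| |T₁| − |T₂| | ≤ p`. -/
def FeasPair (n : ℕ) (S : Finset ℕ) (p : ℕ) (T₁ T₂ : Finset ℕ) : Prop :=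
  T₁ ∪ T₂ = Finset.Icc 1 n ∧ T₁ ∩ T₂ = S ∧
    |(T₁.card : ℤ) - (T₂.card : ℤ)| ≤ (p : ℤ)

/-- Total cost of the pyramidal-structured feasible solution on `(T₁, T₂)`:
the first tour visits `T₁` in increasing order (starting at node `1`),
the second tour visits `T₂` in decreasing order (ending at node `1`). -/
noncomputable def pyramidalCost (C : ℕ → ℕ → ℝ) (T₁ T₂ : Finset ℕ) : ℝ :=
  tourLen C (T₁.sort (· ≤ ·)) + tourLen C ((T₂.sort (· ≤ ·)).reverse)

section Aux
variable (C : ℕ → ℕ → ℝ)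

lemma pathLen_concat : ∀ (l : List ℕ) (b a : ℕ),
    pathLen C (l ++ [b, a]) = pathLen C (l ++ [b]) + C b a := by
  intro l
  induction l with
  | nil => intro b a; simp [pathLen]
  | cons c l ih =>
    intro b a
    cases l with
    | nil => simp [pathLen]
    | cons d l' =>
      simp only [List.cons_append, pathLen, List.append_eq] at *
      rw [ih]; ring

lemma pathLen_reverse (hsym : ∀ i j, C i j = C j i) : ∀ l : List ℕ,
    pathLen C l.reverse = pathLen C l := by
  intro l
  induction l with
  | nil => rfl
  | cons a l ih =>
    cases l with
    | nil => rfl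
    | cons b t =>
      have h1 : (a :: b :: t).reverse = t.reverse ++ [b, a] := by simp
      have h2 : (b :: t).reverse = t.reverse ++ [b] := by simp
      rw [h1, pathLen_concat, ← h2, ih]
      simp only [pathLen, hsym b a]
      ring

lemma tourLen_cons (x : ℕ) (L : List ℕ) :
    tourLen C (x :: L) = pathLen C (x :: (L ++ [x])) := by
  simp [tourLen]

lemma tourLen_reverse (hsym : ∀ i j, C i j = C j i) (l : List ℕ) :
    tourLen C l.reverse = tourLen C l := by
  cases l with
  | nil => rfl
  | cons x L =>
    rw [tourLen_cons]
    have hrev : pathLen C (x :: (L ++ [x])) = pathLen C (x :: (L.reverse ++ [x])) := by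
      have h := pathLen_reverse C hsym (x :: (L ++ [x]))
      have he : (x :: (L ++ [x])).reverse = x :: (L.reverse ++ [x]) := by simp
      rw [he] at h
      exact h.symm
    rw [hrev]
    have hxl : (x :: L).reverse = L.reverse ++ [x] := by simp
    rw [hxl]
    cases hL : L.reverse with
    | nil => simp [tourLen, pathLen]
    | cons c M =>
      have h1 : tourLen C ((c :: M) ++ [x]) = pathLen C ((c :: M) ++ [x, c]) := by
        simp [tourLen]
      rw [h1, pathLen_concat]
      simp only [pathLen, List.cons_append, List.append_eq]
      rw [hsym x c]
      ring

end Aux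

section Aux2
variable (C : ℕ → ℕ → ℝ)

lemma complLen_eq (hsym : ∀ i j, C i j = C j i) (x y : ℕ) (A B : Finset ℕ) :
    complLen C x y A B =
      pathLen C (x :: (A.sort (· ≤ ·) ++ [1])) +
        pathLen C (y :: (B.sort (· ≤ ·) ++ [1])) := by
  unfold complLen
  congr 1
  have h : (1 : ℕ) :: ((B.sort (· ≤ ·)).reverse ++ [y]) =
      (y :: (B.sort (· ≤ ·) ++ [1])).reverse := by simp
  rw [h, pathLen_reverse C hsym]

lemma sort_insert_one (B : Finset ℕ) (hB : ∀ b ∈ B, 3 ≤ b) :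
    (insert 1 B).sort (· ≤ ·) = 1 :: B.sort (· ≤ ·) := by
  apply Finset.sort_insert
  · intro b hb; exact le_trans (by norm_num) (hB b hb)
  · intro h; exact absurd (hB 1 h) (by norm_num)

lemma sort_insert_one_two (A : Finset ℕ) (hA : ∀ a ∈ A, 3 ≤ a) :
    (insert 1 (insert 2 A)).sort (· ≤ ·) = 1 :: 2 :: A.sort (· ≤ ·) := by
  rw [Finset.sort_insert, Finset.sort_insert]
  · intro a ha; exact le_trans (by norm_num) (hA a ha)
  · intro h; exact absurd (hA 2 h) (by norm_num)
  · intro b hb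
    rcases Finset.mem_insert.1 hb with rfl | hb
    · norm_num
    · exact le_trans (by norm_num) (hA b hb)
  · intro h
    rcases Finset.mem_insert.1 h with h | h
    · norm_num at h
    · exact absurd (hA 1 h) (by norm_num)

lemma cost_21 (hsym : ∀ i j, C i j = C j i) (A B : Finset ℕ) (hA : ∀ a ∈ A, 3 ≤ a) (hB : ∀ b ∈ B, 3 ≤ b) :
    pyramidalCost C (insert 1 (insert 2 A)) (insert 1 B) =
      C 1 2 + complLen C 2 1 A B := by
  unfold pyramidalCost
  rw [tourLen_reverse C hsym, sort_insert_one_two A hA, sort_insert_one B hB,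
    tourLen_cons, tourLen_cons, complLen_eq C hsym]
  simp only [pathLen, List.cons_append, List.append_eq]
  ring

lemma cost_12 (hsym : ∀ i j, C i j = C j i) (A B : Finset ℕ) (hA : ∀ a ∈ A, 3 ≤ a) (hB : ∀ b ∈ B, 3 ≤ b) :
    pyramidalCost C (insert 1 A) (insert 1 (insert 2 B)) =
      C 2 1 + complLen C 1 2 A B := by
  unfold pyramidalCost
  rw [tourLen_reverse C hsym, sort_insert_one A hA, sort_insert_one_two B hB,
    tourLen_cons, tourLen_cons, complLen_eq C hsym]
  simp only [pathLen, List.cons_append, List.append_eq]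
  rw [hsym 1 2]
  ring

lemma cost_22 (hsym : ∀ i j, C i j = C j i) (A B : Finset ℕ) (hA : ∀ a ∈ A, 3 ≤ a) (hB : ∀ b ∈ B, 3 ≤ b) :
    pyramidalCost C (insert 1 (insert 2 A)) (insert 1 (insert 2 B)) =
      (C 1 2 + C 2 1) + complLen C 2 2 A B := by
  unfold pyramidalCost
  rw [tourLen_reverse C hsym, sort_insert_one_two A hA, sort_insert_one_two B hB,
    tourLen_cons, tourLen_cons, complLen_eq C hsym]
  simp only [pathLen, List.cons_append, List.append_eq]
  rw [hsym 2 1]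
  ring

end Aux2

lemma add_iInf_eq {ι : Sort*} (c : ℝ) (f : ι → EReal) :
    (c : EReal) + ⨅ i, f i = ⨅ i, ((c : EReal) + f i) := by
  apply le_antisymm
  · exact le_iInf fun i => add_le_add (le_refl _) (iInf_le f i)
  · have h : ∀ i, (⨅ j, ((c : EReal) + f j)) - (c : EReal) ≤ f i := by
      intro i
      rw [EReal.sub_le_iff_le_add (Or.inl (EReal.coe_ne_bot c))
        (Or.inl (EReal.coe_ne_top c))]
      rw [add_comm]
      exact iInf_le _ i
    have h2 := le_iInf h
    rw [EReal.sub_le_iff_le_add (Or.inl (EReal.coe_ne_bot c))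
      (Or.inl (EReal.coe_ne_top c))] at h2
    rwa [add_comm] at h2

lemma balance_iff (n sc p : ℕ) (t₁ t₂ : ℤ) (hsum : t₁ + t₂ = (n : ℤ) + sc) :
    |t₁ - t₂| ≤ (p : ℤ) ↔
      (⌈((n : ℚ) + sc - p) / 2⌉ ≤ t₂ ∧ t₂ ≤ ⌊((n : ℚ) + sc + p) / 2⌋) := by
  rw [abs_le, Int.ceil_le, Int.le_floor]
  have hq : (t₁ : ℚ) + (t₂ : ℚ) = (n : ℚ) + (sc : ℚ) := by exact_mod_cast hsum
  constructor
  · rintro ⟨h1, h2⟩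
    have h1' : -(p : ℚ) ≤ (t₁ : ℚ) - t₂ := by exact_mod_cast h1
    have h2' : (t₁ : ℚ) - t₂ ≤ p := by exact_mod_cast h2
    constructor
    · linarith
    · linarith
  · rintro ⟨h1, h2⟩
    constructor
    · have : -(p : ℚ) ≤ (t₁ : ℚ) - t₂ := by linarith
      exact_mod_cast this
    · have : (t₁ : ℚ) - t₂ ≤ p := by linarith
      exact_mod_cast this

section Corr
variable {n : ℕ} {S : Finset ℕ}

lemma pair_21 (hn : 2 ≤ n) (hS : S ⊆ Finset.Icc 1 n) (h1S : 1 ∈ S) (h2S : 2 ∉ S)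
    (A B : Finset ℕ) (hu : A ∪ B = Finset.Icc 3 n) (hi : A ∩ B = S ∩ Finset.Icc 3 n) :
    (insert 1 (insert 2 A)) ∪ (insert 1 B) = Finset.Icc 1 n ∧
    (insert 1 (insert 2 A)) ∩ (insert 1 B) = S ∧
    (insert 1 (insert 2 A)).card = A.card + 2 ∧
    (insert 1 B).card = B.card + 1 := by
  have hA : ∀ a ∈ A, 3 ≤ a ∧ a ≤ n := fun a ha =>
    Finset.mem_Icc.1 (hu ▸ Finset.mem_union_left B ha)
  have hB : ∀ b ∈ B, 3 ≤ b ∧ b ≤ n := fun b hb =>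
    Finset.mem_Icc.1 (hu ▸ Finset.mem_union_right A hb)
  have h1A : (1 : ℕ) ∉ A := fun h => by have := hA 1 h; omega
  have h2A : (2 : ℕ) ∉ A := fun h => by have := hA 2 h; omega
  have h1B : (1 : ℕ) ∉ B := fun h => by have := hB 1 h; omega
  have h2B : (2 : ℕ) ∉ B := fun h => by have := hB 2 h; omega
  refine ⟨?_, ?_, ?_, ?_⟩
  · ext k
    simp only [Finset.mem_union, Finset.mem_insert, Finset.mem_Icc]
    constructor
    · rintro ((rfl | rfl | hk) | (rfl | hk))
      · omega
      · omega
      · have := hA k hk; omega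
      · omega
      · have := hB k hk; omega
    · intro hk
      rcases eq_or_ne k 1 with rfl | hk1
      · exact Or.inl (Or.inl rfl)
      rcases eq_or_ne k 2 with rfl | hk2
      · exact Or.inl (Or.inr (Or.inl rfl))
      have hk3 : k ∈ A ∪ B := by
        rw [hu, Finset.mem_Icc]; omega
      rcases Finset.mem_union.1 hk3 with h | h
      · exact Or.inl (Or.inr (Or.inr h))
      · exact Or.inr (Or.inr h)
  · ext k
    simp only [Finset.mem_inter, Finset.mem_insert]
    constructor
    · rintro ⟨h1 | h1 | h1, h2⟩
      · exact h1 ▸ h1S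
      · subst h1
        rcases h2 with h2 | h2
        · norm_num at h2
        · exact absurd h2 h2B
      · rcases h2 with rfl | h2
        · exact absurd h1 h1A
        · have : k ∈ A ∩ B := Finset.mem_inter.2 ⟨h1, h2⟩
          rw [hi] at this
          exact (Finset.mem_inter.1 this).1
    · intro hkS
      rcases eq_or_ne k 1 with rfl | hk1
      · exact ⟨Or.inl rfl, Or.inl rfl⟩
      have hk2 : k ≠ 2 := fun h => h2S (h ▸ hkS)
      have hkn := Finset.mem_Icc.1 (hS hkS)
      have hk : k ∈ A ∩ B := by
        rw [hi]
        exact Finset.mem_inter.2 ⟨hkS, Finset.mem_Icc.2 ⟨by omega, hkn.2⟩⟩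
      rcases Finset.mem_inter.1 hk with ⟨hka, hkb⟩
      exact ⟨Or.inr (Or.inr hka), Or.inr hkb⟩
  · rw [Finset.card_insert_of_notMem (by
        simp only [Finset.mem_insert]
        rintro (h | h)
        · norm_num at h
        · exact h1A h),
      Finset.card_insert_of_notMem h2A]
  · rw [Finset.card_insert_of_notMem h1B]

lemma pair_22 (hn : 2 ≤ n) (hS : S ⊆ Finset.Icc 1 n) (h1S : 1 ∈ S) (h2S : 2 ∈ S)
    (A B : Finset ℕ) (hu : A ∪ B = Finset.Icc 3 n) (hi : A ∩ B = S ∩ Finset.Icc 3 n) :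
    (insert 1 (insert 2 A)) ∪ (insert 1 (insert 2 B)) = Finset.Icc 1 n ∧
    (insert 1 (insert 2 A)) ∩ (insert 1 (insert 2 B)) = S ∧
    (insert 1 (insert 2 A)).card = A.card + 2 ∧
    (insert 1 (insert 2 B)).card = B.card + 2 := by
  have hA : ∀ a ∈ A, 3 ≤ a ∧ a ≤ n := fun a ha =>
    Finset.mem_Icc.1 (hu ▸ Finset.mem_union_left B ha)
  have hB : ∀ b ∈ B, 3 ≤ b ∧ b ≤ n := fun b hb =>
    Finset.mem_Icc.1 (hu ▸ Finset.mem_union_right A hb)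
  have h1A : (1 : ℕ) ∉ A := fun h => by have := hA 1 h; omega
  have h2A : (2 : ℕ) ∉ A := fun h => by have := hA 2 h; omega
  have h1B : (1 : ℕ) ∉ B := fun h => by have := hB 1 h; omega
  have h2B : (2 : ℕ) ∉ B := fun h => by have := hB 2 h; omega
  refine ⟨?_, ?_, ?_, ?_⟩
  · ext k
    simp only [Finset.mem_union, Finset.mem_insert, Finset.mem_Icc]
    constructor
    · rintro ((rfl | rfl | hk) | (rfl | rfl | hk))
      · omega
      · omega
      · have := hA k hk; omega
      · omega
      · omega
      · have := hB k hk; omega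
    · intro hk
      rcases eq_or_ne k 1 with rfl | hk1
      · exact Or.inl (Or.inl rfl)
      rcases eq_or_ne k 2 with rfl | hk2
      · exact Or.inl (Or.inr (Or.inl rfl))
      have hk3 : k ∈ A ∪ B := by rw [hu, Finset.mem_Icc]; omega
      rcases Finset.mem_union.1 hk3 with h | h
      · exact Or.inl (Or.inr (Or.inr h))
      · exact Or.inr (Or.inr (Or.inr h))
  · ext k
    simp only [Finset.mem_inter, Finset.mem_insert]
    constructor
    · rintro ⟨h1 | h1 | h1, h2⟩
      · exact h1 ▸ h1S
      · exact h1 ▸ h2S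
      · rcases h2 with rfl | rfl | h2
        · exact absurd h1 h1A
        · exact absurd h1 h2A
        · have : k ∈ A ∩ B := Finset.mem_inter.2 ⟨h1, h2⟩
          rw [hi] at this
          exact (Finset.mem_inter.1 this).1
    · intro hkS
      rcases eq_or_ne k 1 with rfl | hk1
      · exact ⟨Or.inl rfl, Or.inl rfl⟩
      rcases eq_or_ne k 2 with rfl | hk2
      · exact ⟨Or.inr (Or.inl rfl), Or.inr (Or.inl rfl)⟩
      have hkn := Finset.mem_Icc.1 (hS hkS)
      have hk : k ∈ A ∩ B := by
        rw [hi]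
        exact Finset.mem_inter.2 ⟨hkS, Finset.mem_Icc.2 ⟨by omega, hkn.2⟩⟩
      rcases Finset.mem_inter.1 hk with ⟨hka, hkb⟩
      exact ⟨Or.inr (Or.inr hka), Or.inr (Or.inr hkb)⟩
  · rw [Finset.card_insert_of_notMem (by
        simp only [Finset.mem_insert]
        rintro (h | h)
        · norm_num at h
        · exact h1A h),
      Finset.card_insert_of_notMem h2A]
  · rw [Finset.card_insert_of_notMem (by
        simp only [Finset.mem_insert]
        rintro (h | h)
        · norm_num at h
        · exact h1B h),
      Finset.card_insert_of_notMem h2B]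

lemma unpair_21 (hn : 2 ≤ n) (hS : S ⊆ Finset.Icc 1 n) (h1S : 1 ∈ S) (h2S : 2 ∉ S)
    (T₁ T₂ : Finset ℕ) (hu : T₁ ∪ T₂ = Finset.Icc 1 n) (hi : T₁ ∩ T₂ = S)
    (h2T1 : 2 ∈ T₁) :
    ∃ A B : Finset ℕ, T₁ = insert 1 (insert 2 A) ∧ T₂ = insert 1 B ∧
      A ∪ B = Finset.Icc 3 n ∧ A ∩ B = S ∩ Finset.Icc 3 n ∧
      (∀ a ∈ A, 3 ≤ a) ∧ (∀ b ∈ B, 3 ≤ b) ∧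
      T₁.card = A.card + 2 ∧ T₂.card = B.card + 1 := by
  have h1T1 : 1 ∈ T₁ := (Finset.mem_inter.1 (hi.symm ▸ h1S)).1
  have h1T2 : 1 ∈ T₂ := (Finset.mem_inter.1 (hi.symm ▸ h1S)).2
  have h2T2 : 2 ∉ T₂ := fun h => h2S (hi ▸ Finset.mem_inter.2 ⟨h2T1, h⟩)
  have hb1 : ∀ k ∈ T₁, 1 ≤ k ∧ k ≤ n := fun k hk =>
    Finset.mem_Icc.1 (hu ▸ Finset.mem_union_left T₂ hk)
  have hb2 : ∀ k ∈ T₂, 1 ≤ k ∧ k ≤ n := fun k hk =>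
    Finset.mem_Icc.1 (hu ▸ Finset.mem_union_right T₁ hk)
  refine ⟨(T₁.erase 1).erase 2, T₂.erase 1, ?_, ?_, ?_, ?_, ?_, ?_, ?_, ?_⟩
  · rw [Finset.insert_erase (Finset.mem_erase.2 ⟨by norm_num, h2T1⟩),
      Finset.insert_erase h1T1]
  · rw [Finset.insert_erase h1T2]
  · ext k
    simp only [Finset.mem_union, Finset.mem_erase, Finset.mem_Icc]
    constructor
    · rintro (⟨hk2, hk1, hk⟩ | ⟨hk1, hk⟩)
      · have := hb1 k hk; omega
      · have hb := hb2 k hk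
        have hne : k ≠ 2 := fun h => h2T2 (h ▸ hk)
        omega
    · intro hk
      have hk' : k ∈ T₁ ∪ T₂ := by rw [hu, Finset.mem_Icc]; omega
      rcases Finset.mem_union.1 hk' with h | h
      · exact Or.inl ⟨by omega, by omega, h⟩
      · exact Or.inr ⟨by omega, h⟩
  · ext k
    simp only [Finset.mem_inter, Finset.mem_erase, Finset.mem_Icc]
    constructor
    · rintro ⟨⟨hk2, hk1, hkT1⟩, hk1', hkT2⟩
      have hkS : k ∈ S := hi ▸ Finset.mem_inter.2 ⟨hkT1, hkT2⟩
      have := hb1 k hkT1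
      exact ⟨hkS, by omega, by omega⟩
    · rintro ⟨hkS, hk3, hkn⟩
      have hmem : k ∈ T₁ ∩ T₂ := hi.symm ▸ hkS
      rcases Finset.mem_inter.1 hmem with ⟨h1, h2⟩
      exact ⟨⟨by omega, by omega, h1⟩, by omega, h2⟩
  · intro a ha
    rw [Finset.mem_erase, Finset.mem_erase] at ha
    have := hb1 a ha.2.2; omega
  · intro b hb
    rw [Finset.mem_erase] at hb
    have hbb := hb2 b hb.2
    have hne : b ≠ 2 := fun h => h2T2 (h ▸ hb.2)
    omega
  · rw [Finset.card_erase_of_mem (Finset.mem_erase.2 ⟨by norm_num, h2T1⟩),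
      Finset.card_erase_of_mem h1T1]
    have : 2 ≤ T₁.card := by
      have : ({1, 2} : Finset ℕ) ⊆ T₁ := by
        intro k hk
        rcases Finset.mem_insert.1 hk with rfl | hk
        · exact h1T1
        · rwa [Finset.mem_singleton.1 hk]
      have := Finset.card_le_card this
      simpa using this
    omega
  · rw [Finset.card_erase_of_mem h1T2]
    have : 1 ≤ T₂.card := Finset.card_pos.2 ⟨1, h1T2⟩
    omega

lemma unpair_22 (hn : 2 ≤ n) (hS : S ⊆ Finset.Icc 1 n) (h1S : 1 ∈ S) (h2S : 2 ∈ S)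
    (T₁ T₂ : Finset ℕ) (hu : T₁ ∪ T₂ = Finset.Icc 1 n) (hi : T₁ ∩ T₂ = S) :
    ∃ A B : Finset ℕ, T₁ = insert 1 (insert 2 A) ∧ T₂ = insert 1 (insert 2 B) ∧
      A ∪ B = Finset.Icc 3 n ∧ A ∩ B = S ∩ Finset.Icc 3 n ∧
      (∀ a ∈ A, 3 ≤ a) ∧ (∀ b ∈ B, 3 ≤ b) ∧
      T₁.card = A.card + 2 ∧ T₂.card = B.card + 2 := by
  have h1T1 : 1 ∈ T₁ := (Finset.mem_inter.1 (hi.symm ▸ h1S)).1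
  have h1T2 : 1 ∈ T₂ := (Finset.mem_inter.1 (hi.symm ▸ h1S)).2
  have h2T1 : 2 ∈ T₁ := (Finset.mem_inter.1 (hi.symm ▸ h2S)).1
  have h2T2 : 2 ∈ T₂ := (Finset.mem_inter.1 (hi.symm ▸ h2S)).2
  have hb1 : ∀ k ∈ T₁, 1 ≤ k ∧ k ≤ n := fun k hk =>
    Finset.mem_Icc.1 (hu ▸ Finset.mem_union_left T₂ hk)
  have hb2 : ∀ k ∈ T₂, 1 ≤ k ∧ k ≤ n := fun k hk =>
    Finset.mem_Icc.1 (hu ▸ Finset.mem_union_right T₁ hk)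
  have hcard : ∀ T : Finset ℕ, 1 ∈ T → 2 ∈ T →
      T.card = ((T.erase 1).erase 2).card + 2 := by
    intro T h1 h2
    rw [Finset.card_erase_of_mem (Finset.mem_erase.2 ⟨by norm_num, h2⟩),
      Finset.card_erase_of_mem h1]
    have : 2 ≤ T.card := by
      have hsub : ({1, 2} : Finset ℕ) ⊆ T := by
        intro k hk
        rcases Finset.mem_insert.1 hk with rfl | hk
        · exact h1
        · rwa [Finset.mem_singleton.1 hk]
      have := Finset.card_le_card hsub
      simpa using this
    omega
  refine ⟨(T₁.erase 1).erase 2, (T₂.erase 1).erase 2, ?_, ?_, ?_, ?_, ?_, ?_,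
    hcard T₁ h1T1 h2T1, hcard T₂ h1T2 h2T2⟩
  · rw [Finset.insert_erase (Finset.mem_erase.2 ⟨by norm_num, h2T1⟩),
      Finset.insert_erase h1T1]
  · rw [Finset.insert_erase (Finset.mem_erase.2 ⟨by norm_num, h2T2⟩),
      Finset.insert_erase h1T2]
  · ext k
    simp only [Finset.mem_union, Finset.mem_erase, Finset.mem_Icc]
    constructor
    · rintro (⟨hk2, hk1, hk⟩ | ⟨hk2, hk1, hk⟩)
      · have := hb1 k hk; omega
      · have := hb2 k hk; omega
    · intro hk
      have hk' : k ∈ T₁ ∪ T₂ := by rw [hu, Finset.mem_Icc]; omega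
      rcases Finset.mem_union.1 hk' with h | h
      · exact Or.inl ⟨by omega, by omega, h⟩
      · exact Or.inr ⟨by omega, by omega, h⟩
  · ext k
    simp only [Finset.mem_inter, Finset.mem_erase, Finset.mem_Icc]
    constructor
    · rintro ⟨⟨hk2, hk1, hkT1⟩, _, _, hkT2⟩
      have hkS : k ∈ S := hi ▸ Finset.mem_inter.2 ⟨hkT1, hkT2⟩
      have := hb1 k hkT1
      exact ⟨hkS, by omega, by omega⟩
    · rintro ⟨hkS, hk3, hkn⟩
      have hmem : k ∈ T₁ ∩ T₂ := hi.symm ▸ hkS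
      rcases Finset.mem_inter.1 hmem with ⟨h1, h2⟩
      exact ⟨⟨by omega, by omega, h1⟩, by omega, by omega, h2⟩
  · intro a ha
    rw [Finset.mem_erase, Finset.mem_erase] at ha
    have := hb1 a ha.2.2; omega
  · intro b hb
    rw [Finset.mem_erase, Finset.mem_erase] at hb
    have := hb2 b hb.2.2; omega

end Corr

theorem dp_value_of_optimal_pyramidal_solution
    (n : ℕ) (hn : 2 ≤ n) (C : ℕ → ℕ → ℝ) (hsym : ∀ i j, C i j = C j i)
    (S : Finset ℕ) (hS : S ⊆ Finset.Icc 1 n) (h1S : 1 ∈ S) (p : ℕ) :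
    (⨅ TB : {TB : Finset ℕ × Finset ℕ // FeasPair n S p TB.1 TB.2},
        ((pyramidalCost C TB.1.1 TB.1.2 : ℝ) : EReal)) =
      if 2 ∈ S then
        ((C 1 2 + C 2 1 : ℝ) : EReal) + V n C S p 2 2 2
      else
        min (((C 1 2 : ℝ) : EReal) + V n C S p 2 1 1)
          (((C 2 1 : ℝ) : EReal) + V n C S p 1 2 2) := by
  classical
  have hcsum : ∀ T₁ T₂ : Finset ℕ, T₁ ∪ T₂ = Finset.Icc 1 n → T₁ ∩ T₂ = S →
      (T₁.card : ℤ) + (T₂.card : ℤ) = (n : ℤ) + S.card := by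
    intro T₁ T₂ hu hi
    have h := Finset.card_union_add_card_inter T₁ T₂
    rw [hu, hi] at h
    have hn' : (Finset.Icc 1 n).card = n := by rw [Nat.card_Icc]; omega
    rw [hn'] at h
    push_cast
    omega
  by_cases h2S : 2 ∈ S
  · -- case 2 ∈ S
    rw [if_pos h2S, V, if_neg (by simp), add_iInf_eq]
    have h3 : max 2 2 + 1 = 3 := by norm_num
    apply le_antisymm
    · refine le_iInf ?_
      rintro ⟨⟨A, B⟩, ⟨hcu, hci⟩, hlo, hhi⟩
      rw [h3] at hcu hci
      have hA3 : ∀ a ∈ A, 3 ≤ a := fun a ha =>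
        (Finset.mem_Icc.1 (hcu ▸ Finset.mem_union_left B ha)).1
      have hB3 : ∀ b ∈ B, 3 ≤ b := fun b hb =>
        (Finset.mem_Icc.1 (hcu ▸ Finset.mem_union_right A hb)).1
      obtain ⟨hu', hi', hc1, hc2⟩ := pair_22 hn hS h1S h2S A B hcu hci
      have hsum' := hcsum _ _ hu' hi'
      refine iInf_le_of_le ⟨⟨insert 1 (insert 2 A), insert 1 (insert 2 B)⟩,
        hu', hi', ?_⟩ ?_
      · rw [balance_iff n S.card p _ _ hsum']
        push_cast at hlo hhi ⊢
        rw [hc2]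
        push_cast
        constructor
        · linarith
        · linarith
      · apply le_of_eq
        rw [← EReal.coe_add, EReal.coe_eq_coe_iff]
        exact cost_22 C hsym A B hA3 hB3
    · refine le_iInf ?_
      rintro ⟨⟨T₁, T₂⟩, hu, hi, hbal⟩
      obtain ⟨A, B, hT1, hT2, hcu, hci, hA3, hB3, hc1, hc2⟩ :=
        unpair_22 hn hS h1S h2S T₁ T₂ hu hi
      subst hT1
      subst hT2
      have hsum' := hcsum _ _ hu hi
      rw [balance_iff n S.card p _ _ hsum'] at hbal
      refine iInf_le_of_le ⟨⟨A, B⟩, ⟨by rw [h3]; exact hcu, by rw [h3]; exact hci⟩,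
        ?_, ?_⟩ ?_
      · rw [hc2] at hbal
        push_cast at hbal ⊢
        linarith [hbal.1]
      · rw [hc2] at hbal
        push_cast at hbal ⊢
        linarith [hbal.2]
      · apply le_of_eq
        rw [← EReal.coe_add, EReal.coe_eq_coe_iff]
        exact (cost_22 C hsym A B hA3 hB3).symm
  · -- case 2 ∉ S
    rw [if_neg h2S]
    have hV21 : ¬((2 : ℕ) ≠ 1 ∧ (S ∩ Finset.Icc (min 2 1 + 1) (max 2 1)).Nonempty) := by
      rintro ⟨-, k, hk⟩
      rw [Finset.mem_inter, Finset.mem_Icc] at hk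
      have hk2 : k = 2 := by omega
      exact h2S (hk2 ▸ hk.1)
    have hV12 : ¬((1 : ℕ) ≠ 2 ∧ (S ∩ Finset.Icc (min 1 2 + 1) (max 1 2)).Nonempty) := by
      rintro ⟨-, k, hk⟩
      rw [Finset.mem_inter, Finset.mem_Icc] at hk
      have hk2 : k = 2 := by omega
      exact h2S (hk2 ▸ hk.1)
    rw [V, V, if_neg hV21, if_neg hV12, add_iInf_eq, add_iInf_eq]
    have h321 : max 2 1 + 1 = 3 := by norm_num
    have h312 : max 1 2 + 1 = 3 := by norm_num
    apply le_antisymm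
    · rw [le_min_iff]
      constructor
      · refine le_iInf ?_
        rintro ⟨⟨A, B⟩, ⟨hcu, hci⟩, hlo, hhi⟩
        rw [h321] at hcu hci
        have hA3 : ∀ a ∈ A, 3 ≤ a := fun a ha =>
          (Finset.mem_Icc.1 (hcu ▸ Finset.mem_union_left B ha)).1
        have hB3 : ∀ b ∈ B, 3 ≤ b := fun b hb =>
          (Finset.mem_Icc.1 (hcu ▸ Finset.mem_union_right A hb)).1
        obtain ⟨hu', hi', hc1, hc2⟩ := pair_21 hn hS h1S h2S A B hcu hci
        have hsum' := hcsum _ _ hu' hi'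
        refine iInf_le_of_le ⟨⟨insert 1 (insert 2 A), insert 1 B⟩, hu', hi', ?_⟩ ?_
        · rw [balance_iff n S.card p _ _ hsum']
          push_cast at hlo hhi ⊢
          rw [hc2]
          push_cast
          constructor
          · linarith
          · linarith
        · apply le_of_eq
          rw [← EReal.coe_add, EReal.coe_eq_coe_iff]
          exact cost_21 C hsym A B hA3 hB3
      · refine le_iInf ?_
        rintro ⟨⟨A, B⟩, ⟨hcu, hci⟩, hlo, hhi⟩
        rw [h312] at hcu hci
        have hA3 : ∀ a ∈ A, 3 ≤ a := fun a ha =>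
          (Finset.mem_Icc.1 (hcu ▸ Finset.mem_union_left B ha)).1
        have hB3 : ∀ b ∈ B, 3 ≤ b := fun b hb =>
          (Finset.mem_Icc.1 (hcu ▸ Finset.mem_union_right A hb)).1
        obtain ⟨hu', hi', hc1, hc2⟩ := pair_21 hn hS h1S h2S B A
          (by rw [Finset.union_comm]; exact hcu) (by rw [Finset.inter_comm]; exact hci)
        have hu'' : (insert 1 A) ∪ (insert 1 (insert 2 B)) = Finset.Icc 1 n := by
          rw [Finset.union_comm]; exact hu'
        have hi'' : (insert 1 A) ∩ (insert 1 (insert 2 B)) = S := by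
          rw [Finset.inter_comm]; exact hi'
        have hsum' := hcsum _ _ hu'' hi''
        refine iInf_le_of_le ⟨⟨insert 1 A, insert 1 (insert 2 B)⟩, hu'', hi'', ?_⟩ ?_
        · rw [balance_iff n S.card p _ _ hsum']
          push_cast at hlo hhi ⊢
          rw [hc1]
          push_cast
          constructor
          · linarith
          · linarith
        · apply le_of_eq
          rw [← EReal.coe_add, EReal.coe_eq_coe_iff]
          exact cost_12 C hsym A B hA3 hB3
    · refine le_iInf ?_
      rintro ⟨⟨T₁, T₂⟩, hu, hi, hbal⟩
      have hsum' := hcsum _ _ hu hi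
      rw [balance_iff n S.card p _ _ hsum'] at hbal
      by_cases h2T1 : 2 ∈ T₁
      · obtain ⟨A, B, hT1, hT2, hcu, hci, hA3, hB3, hc1, hc2⟩ :=
          unpair_21 hn hS h1S h2S T₁ T₂ hu hi h2T1
        subst hT1
        subst hT2
        refine le_trans (min_le_left _ _) ?_
        refine iInf_le_of_le ⟨⟨A, B⟩,
          ⟨by rw [h321]; exact hcu, by rw [h321]; exact hci⟩, ?_, ?_⟩ ?_
        · rw [hc2] at hbal
          push_cast at hbal ⊢
          linarith [hbal.1]
        · rw [hc2] at hbal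
          push_cast at hbal ⊢
          linarith [hbal.2]
        · apply le_of_eq
          rw [← EReal.coe_add, EReal.coe_eq_coe_iff]
          exact (cost_21 C hsym A B hA3 hB3).symm
      · have h2T2 : 2 ∈ T₂ := by
          have h2mem : 2 ∈ T₁ ∪ T₂ := by
            rw [hu, Finset.mem_Icc]; omega
          rcases Finset.mem_union.1 h2mem with h | h
          · exact absurd h h2T1
          · exact h
        obtain ⟨A, B, hT2, hT1, hcu, hci, hA3, hB3, hc2, hc1⟩ :=
          unpair_21 hn hS h1S h2S T₂ T₁ (by rw [Finset.union_comm]; exact hu)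
            (by rw [Finset.inter_comm]; exact hi) h2T2
        subst hT1
        subst hT2
        refine le_trans (min_le_right _ _) ?_
        refine iInf_le_of_le ⟨⟨B, A⟩,
          ⟨by rw [h312, Finset.union_comm]; exact hcu,
           by rw [h312, Finset.inter_comm]; exact hci⟩, ?_, ?_⟩ ?_
        · rw [hc2] at hbal
          push_cast at hbal ⊢
          linarith [hbal.1]
        · rw [hc2] at hbal
          push_cast at hbal ⊢
          linarith [hbal.2]
        · apply le_of_eq
          rw [← EReal.coe_add, EReal.coe_eq_coe_iff]
          exact (cost_12 C hsym B A hB3 hA3).symm
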